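/- Let p: 𝔛 → 𝔅 be a surjective 1-Lipschitz map between geodesic metric spaces with fibers 𝔉_a = p⁻¹(a) that are geodesic spaces f-properly embedded in 𝔛 (f a proper function). Suppose k ≥ 1 and p satisfies uniform k-flaring with threshold constant M_k. Then for every C ≥ 0 there exists R = R(k, C) > C such that: if γ₁, γ₂ are two k-qi lifts of a geodesic γ: [0, r] → 𝔅 with max{d_{γ(0)}(γ₁(0), γ₂(0)), d_{γ(r)}(γ₁(r), γ₂(r))} ≤ C, then for all integer times i ∈ [0, r] and at i = r, the fiber distance d_{γ(i)}(γ₁(i), γ₂(i)) ≤ R. -/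

import Mathlib

open Metric Set

/-- A geodesic from `a` to `b` in a metric space, parametrized by arc length
on the interval `[0, dist a b]`. -/
def IsGeodesicFrom {X : Type*} [MetricSpace X] (γ : ℝ → X) (a b : X) : Prop :=
  γ 0 = a ∧ γ (dist a b) = b ∧
    ∀ s ∈ Set.Icc (0 : ℝ) (dist a b), ∀ t ∈ Set.Icc (0 : ℝ) (dist a b),
      dist (γ s) (γ t) = |s - t|

/-- A geodesic metric space: any two points are joined by a geodesic. -/
def GeodesicMetricSpace (X : Type*) [MetricSpace X] : Prop :=
  ∀ a b : X, ∃ γ : ℝ → X, IsGeodesicFrom γ a b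

/-- The image of a geodesic segment from `a` to `b`. -/
def geodImage {X : Type*} [MetricSpace X] (γ : ℝ → X) (a b : X) : Set X :=
  γ '' Set.Icc 0 (dist a b)

/-- `X` is `δ`-hyperbolic: every geodesic triangle is `δ`-slim, i.e. each side is
contained in the `δ`-neighbourhood of the union of the other two sides. -/
def DeltaHyp (X : Type*) [MetricSpace X] (δ : ℝ) : Prop :=
  ∀ (a b c : X) (γ₁ γ₂ γ₃ : ℝ → X),
    IsGeodesicFrom γ₁ a b → IsGeodesicFrom γ₂ b c → IsGeodesicFrom γ₃ a c →
      ∀ x ∈ geodImage γ₃ a c,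
        Metric.infDist x (geodImage γ₁ a b ∪ geodImage γ₂ b c) ≤ δ

/-- `U` is a `K`-quasiconvex subset: every geodesic joining two points of `U`
lies in the (closed) `K`-neighbourhood of `U`. -/
def QuasiconvexSet {X : Type*} [MetricSpace X] (K : ℝ) (U : Set X) : Prop :=
  ∀ a ∈ U, ∀ b ∈ U, ∀ γ : ℝ → X, IsGeodesicFrom γ a b →
    ∀ x ∈ geodImage γ a b, Metric.infDist x U ≤ K

/-- `u` is a nearest point projection of `x` on `U`. -/
def IsNPProj {X : Type*} [MetricSpace X] (x : X) (U : Set X) (u : X) : Prop :=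
  u ∈ U ∧ ∀ u' ∈ U, dist x u ≤ dist x u'

/-- The set of all nearest point projections of points of `V` onto `U`
(denoted `P_U(V)` in the paper). -/
def projSet {X : Type*} [MetricSpace X] (U V : Set X) : Set X :=
  {u | ∃ v ∈ V, IsNPProj v U u}

open scoped ENNReal

/-- The induced path (length) distance on a subset `Z` of `X`: the infimum of the
lengths (total variations) of continuous paths in `Z` joining the two points. -/
noncomputable def inducedPathDist {X : Type*} [MetricSpace X] (Z : Set X) (x y : X) : ℝ≥0∞ :=
  ⨅ (γ : ℝ → X) (_ : ContinuousOn γ (Set.Icc 0 1)) (_ : Set.MapsTo γ (Set.Icc 0 1) Z)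
    (_ : γ 0 = x) (_ : γ 1 = y), eVariationOn γ (Set.Icc 0 1)

/-- A proper function `ℝ≥0 → ℝ≥0` (modelled on `ℝ`): nonnegative, monotone, and
diverging at infinity. -/
def ProperFun (f : ℝ → ℝ) : Prop :=
  (∀ r, 0 ≤ f r) ∧ Monotone f ∧ Filter.Tendsto f Filter.atTop Filter.atTop

/-- The fiber distance over `a`: the induced path metric on the fiber `p⁻¹(a)`. -/
noncomputable def fibDist {X B : Type*} [MetricSpace X] (p : X → B) (a : B) (x y : X) : ℝ :=
  (inducedPathDist (p ⁻¹' {a}) x y).toReal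

/-- The ordinary distance is bounded by the fiber distance (path lengths dominate
the distance between endpoints). -/
theorem dist_le_fibDist' {X B : Type*} [MetricSpace X] (p : X → B) (a : B) (x y : X)
    (hfin : inducedPathDist (p ⁻¹' {a}) x y ≠ ⊤) : dist x y ≤ fibDist p a x y := by
  have h : edist x y ≤ inducedPathDist (p ⁻¹' {a}) x y := by
    refine le_iInf fun γ => le_iInf fun _ => le_iInf fun _ => le_iInf fun h0 =>
      le_iInf fun h1 => ?_
    calc edist x y = edist (γ 0) (γ 1) := by rw [h0, h1]
      _ ≤ eVariationOn γ (Set.Icc 0 1) :=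
        eVariationOn.edist_le γ ⟨le_refl (0:ℝ), zero_le_one⟩ ⟨zero_le_one, le_refl (1:ℝ)⟩
  rw [dist_edist, fibDist]
  exact ENNReal.toReal_mono hfin h

/-- If `p : 𝔛 → 𝔅` (surjective, 1-Lipschitz, with geodesic
`f`-properly embedded fibers) satisfies uniform `k`-flaring with threshold `M` and
flaring time `τ`, then for every `C ≥ 0` there is `R > C` such that any pair of
`k`-qi lifts of a geodesic whose endpoint fiber distances are at most `C` has all
fiber distances at integer times (and at the final time) bounded by `R`. -/
theorem middle_is_also_small (f : ℝ → ℝ) (hf : ProperFun f)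
    {XX BB : Type*} [MetricSpace XX] [MetricSpace BB]
    (hXgeo : GeodesicMetricSpace XX) (hBgeo : GeodesicMetricSpace BB)
    (p : XX → BB) (hsurj : Function.Surjective p) (hlip : LipschitzWith 1 p)
    (hfib_fin : ∀ (a : BB) (x y : XX), p x = a → p y = a →
      inducedPathDist (p ⁻¹' {a}) x y ≠ ⊤)
    (hfib_geo : ∀ (a : BB) (x y : XX), p x = a → p y = a →
      ∃ γ : ℝ → XX,
        (∀ t ∈ Set.Icc (0 : ℝ) (fibDist p a x y), p (γ t) = a) ∧
        γ 0 = x ∧ γ (fibDist p a x y) = y ∧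
        ∀ s ∈ Set.Icc (0 : ℝ) (fibDist p a x y), ∀ t ∈ Set.Icc (0 : ℝ) (fibDist p a x y),
          fibDist p a (γ s) (γ t) = |s - t|)
    (hfib_proper : ∀ (a : BB) (x y : XX), p x = a → p y = a →
      ∀ s : ℝ, dist x y ≤ s → fibDist p a x y ≤ f s)
    (k : ℝ) (hk : 1 ≤ k) (M : ℝ) (hM : 0 < M) (τ : ℝ → ℝ)
    (hflare : ∀ D : ℝ, 0 ≤ D →
      ∀ (a b : BB) (γ : ℝ → BB) (γ₀ γ₁ : ℝ → XX),
        IsGeodesicFrom γ a b →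
        (∀ t ∈ Set.Icc (0 : ℝ) (dist a b), p (γ₀ t) = γ t) →
        (∀ t ∈ Set.Icc (0 : ℝ) (dist a b), p (γ₁ t) = γ t) →
        (∀ s ∈ Set.Icc (0 : ℝ) (dist a b), ∀ t ∈ Set.Icc (0 : ℝ) (dist a b),
          |s - t| / k - k ≤ dist (γ₀ s) (γ₀ t) ∧ dist (γ₀ s) (γ₀ t) ≤ k * |s - t| + k) →
        (∀ s ∈ Set.Icc (0 : ℝ) (dist a b), ∀ t ∈ Set.Icc (0 : ℝ) (dist a b),
          |s - t| / k - k ≤ dist (γ₁ s) (γ₁ t) ∧ dist (γ₁ s) (γ₁ t) ≤ k * |s - t| + k) →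
        ∀ (n : ℕ) (ts : ℕ → ℝ),
          ts 0 = 0 → ts n = dist a b →
          (∀ i < n, ts i < ts (i + 1) ∧ ts (i + 1) - ts i ≤ 1) →
          (∀ i, 0 < i → i < n →
            M < fibDist p (γ (ts i)) (γ₀ (ts i)) (γ₁ (ts i))) →
          fibDist p a (γ₀ 0) (γ₁ 0) ≤ D →
          fibDist p b (γ₀ (dist a b)) (γ₁ (dist a b)) ≤ D →
          dist a b ≤ τ D)
    (C : ℝ) (hC : 0 ≤ C) :
    ∃ R : ℝ, C < R ∧
      ∀ (a b : BB) (γ : ℝ → BB) (γ₁ γ₂ : ℝ → XX),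
        IsGeodesicFrom γ a b →
        (∀ t ∈ Set.Icc (0 : ℝ) (dist a b), p (γ₁ t) = γ t) →
        (∀ t ∈ Set.Icc (0 : ℝ) (dist a b), p (γ₂ t) = γ t) →
        (∀ s ∈ Set.Icc (0 : ℝ) (dist a b), ∀ t ∈ Set.Icc (0 : ℝ) (dist a b),
          |s - t| / k - k ≤ dist (γ₁ s) (γ₁ t) ∧ dist (γ₁ s) (γ₁ t) ≤ k * |s - t| + k) →
        (∀ s ∈ Set.Icc (0 : ℝ) (dist a b), ∀ t ∈ Set.Icc (0 : ℝ) (dist a b),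
          |s - t| / k - k ≤ dist (γ₂ s) (γ₂ t) ∧ dist (γ₂ s) (γ₂ t) ≤ k * |s - t| + k) →
        fibDist p a (γ₁ 0) (γ₂ 0) ≤ C →
        fibDist p b (γ₁ (dist a b)) (γ₂ (dist a b)) ≤ C →
        (∀ n : ℕ, (n : ℝ) ≤ dist a b →
            fibDist p (γ (n : ℝ)) (γ₁ (n : ℝ)) (γ₂ (n : ℝ)) ≤ R) ∧
          fibDist p b (γ₁ (dist a b)) (γ₂ (dist a b)) ≤ R := by

  classical
  set D := max C M with hDdef
  have hD : 0 ≤ D := le_trans hC (le_max_left C M)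
  have hCD : C ≤ D := le_max_left C M
  have hMD : M ≤ D := le_max_right C M
  set S := 2 * (k * τ D + k) + D with hSdef
  refine ⟨max D (f S) + 1, by have := le_max_left D (f S); linarith, ?_⟩
  intro a b γ γ₁ γ₂ hγ hl₁ hl₂ hqi₁ hqi₂ he0 he1
  have hL0 : (0:ℝ) ≤ dist a b := dist_nonneg
  set L := dist a b with hLdef
  set N := ⌈L⌉₊ with hNdef
  set s : ℕ → ℝ := fun i => min (i : ℝ) L with hsdef
  have hs0 : s 0 = 0 := by simp [hsdef, hL0]
  have hsN : s N = L := by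
    simp only [hsdef, hNdef]
    exact min_eq_right (Nat.le_ceil L)
  have hsmem : ∀ i, s i ∈ Set.Icc (0:ℝ) L := fun i =>
    ⟨le_min (Nat.cast_nonneg i) hL0, min_le_right _ _⟩
  have hsmono : Monotone s := fun i i' h =>
    min_le_min (by exact_mod_cast h) le_rfl
  have hstep : ∀ i, i < N → s i < s (i + 1) ∧ s (i + 1) - s i ≤ 1 := by
    intro i hi
    have h1 : (i : ℝ) + 1 ≤ (N : ℝ) := by exact_mod_cast Nat.succ_le_of_lt hi
    have h2 : (N : ℝ) < L + 1 := Nat.ceil_lt_add_one hL0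
    have hiL : (i : ℝ) < L := by linarith
    have hsi : s i = i := min_eq_left hiL.le
    have hsu : s (i + 1) = min ((i : ℝ) + 1) L := by
      simp [hsdef]
    constructor
    · rw [hsi, hsu]
      exact lt_min (by linarith) hiL
    · rw [hsi, hsu]
      have := min_le_left ((i : ℝ) + 1) L
      linarith
  -- key claim
  have key : ∀ j, j ≤ N →
      fibDist p (γ (s j)) (γ₁ (s j)) (γ₂ (s j)) ≤ max D (f S) + 1 := by
    intro j hjN
    have hP0 : fibDist p (γ (s 0)) (γ₁ (s 0)) (γ₂ (s 0)) ≤ D := by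
      rw [hs0, hγ.1]; exact le_trans he0 hCD
    have hPN : fibDist p (γ (s N)) (γ₁ (s N)) (γ₂ (s N)) ≤ D := by
      rw [hsN, hγ.2.1]; exact le_trans he1 hCD
    by_cases hcase : fibDist p (γ (s j)) (γ₁ (s j)) (γ₂ (s j)) ≤ D
    · have := le_max_left D (f S); linarith
    push_neg at hcase
    have hj0 : j ≠ 0 := by rintro rfl; exact absurd hP0 (not_le.2 hcase)
    have hjltN : j < N := lt_of_le_of_ne hjN (by rintro rfl; exact absurd hPN (not_le.2 hcase))
    -- largest good index below j
    set Q : ℕ → Prop := fun i => fibDist p (γ (s i)) (γ₁ (s i)) (γ₂ (s i)) ≤ D with hQdef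
    set i₀ := Nat.findGreatest Q j with hi₀def
    have hi₀le : i₀ ≤ j := Nat.findGreatest_le j
    have hi₀P : Q i₀ := Nat.findGreatest_spec (Nat.zero_le j) hP0
    have hi₀lt : i₀ < j := lt_of_le_of_ne hi₀le
      (fun h => absurd (h ▸ hi₀P) (not_le.2 hcase))
    have hgreat : ∀ i, i₀ < i → i ≤ j → D < fibDist p (γ (s i)) (γ₁ (s i)) (γ₂ (s i)) :=
      fun i h1 h2 => lt_of_not_ge (Nat.findGreatest_is_greatest h1 h2)
    -- smallest good index above j
    have hex : ∃ m, Q (j + m) := ⟨N - j, by rw [Nat.add_sub_cancel' hjN]; exact hPN⟩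
    set m₁ := Nat.find hex with hm₁def
    set i₁ := j + m₁ with hi₁def
    have hi₁P : Q i₁ := Nat.find_spec hex
    have hm₁pos : 0 < m₁ := by
      rcases Nat.eq_zero_or_pos m₁ with h | h
      · exfalso
        have h2 := hi₁P
        rw [hi₁def, h, Nat.add_zero] at h2
        exact absurd h2 (not_le.2 hcase)
      · exact h
    have hi₁le : i₁ ≤ N := by
      have hfm : m₁ ≤ N - j := Nat.find_min' hex (by rw [Nat.add_sub_cancel' hjN]; exact hPN)
      omega
    have hmin : ∀ i, j ≤ i → i < i₁ → D < fibDist p (γ (s i)) (γ₁ (s i)) (γ₂ (s i)) := by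
      intro i h1 h2
      have hfm : ¬ Q (j + (i - j)) := Nat.find_min hex (by omega)
      rw [Nat.add_sub_cancel' h1] at hfm
      exact lt_of_not_ge hfm
    have hi₀₁ : i₀ < i₁ := by omega
    have hinterior : ∀ i, i₀ < i → i < i₁ →
        M < fibDist p (γ (s i)) (γ₁ (s i)) (γ₂ (s i)) := by
      intro i h1 h2
      rcases le_or_gt i j with h | h
      · exact lt_of_le_of_lt hMD (hgreat i h1 h)
      · exact lt_of_le_of_lt hMD (hmin i h.le h2)
    -- apply flaring to the restricted geodesic
    have hd : dist (γ (s i₀)) (γ (s i₁)) = s i₁ - s i₀ := by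
      rw [hγ.2.2 (s i₀) (hsmem i₀) (s i₁) (hsmem i₁), abs_sub_comm,
        abs_of_nonneg (sub_nonneg.2 (hsmono hi₀₁.le))]
    have hmemshift : ∀ u ∈ Set.Icc (0:ℝ) (s i₁ - s i₀), s i₀ + u ∈ Set.Icc (0:ℝ) L := by
      intro u hu
      have h1 := (hsmem i₀).1
      have h2 := (hsmem i₁).2
      exact ⟨by linarith [hu.1], by linarith [hu.2]⟩
    have hfl : dist (γ (s i₀)) (γ (s i₁)) ≤ τ D := by
      apply hflare D hD (γ (s i₀)) (γ (s i₁)) (fun u => γ (s i₀ + u))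
        (fun u => γ₁ (s i₀ + u)) (fun u => γ₂ (s i₀ + u)) ?_ ?_ ?_ ?_ ?_
        (i₁ - i₀) (fun i => s (i₀ + i) - s i₀) ?_ ?_ ?_ ?_ ?_ ?_
      · refine ⟨by simp, ?_, ?_⟩
        · show γ (s i₀ + dist (γ (s i₀)) (γ (s i₁))) = γ (s i₁)
          rw [hd]; congr 1; ring
        · intro u hu v hv
          rw [hd] at hu hv
          show dist (γ (s i₀ + u)) (γ (s i₀ + v)) = |u - v|
          rw [hγ.2.2 (s i₀ + u) (hmemshift u hu) (s i₀ + v) (hmemshift v hv)]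
          congr 1; ring
      · intro t ht; rw [hd] at ht; exact hl₁ _ (hmemshift t ht)
      · intro t ht; rw [hd] at ht; exact hl₂ _ (hmemshift t ht)
      · intro u hu v hv
        rw [hd] at hu hv
        have := hqi₁ (s i₀ + u) (hmemshift u hu) (s i₀ + v) (hmemshift v hv)
        rw [show s i₀ + u - (s i₀ + v) = u - v from by ring] at this
        exact this
      · intro u hu v hv
        rw [hd] at hu hv
        have := hqi₂ (s i₀ + u) (hmemshift u hu) (s i₀ + v) (hmemshift v hv)
        rw [show s i₀ + u - (s i₀ + v) = u - v from by ring] at this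
        exact this
      · simp
      · rw [hd, Nat.add_sub_cancel' hi₀₁.le]
      · intro i hi
        have hlt : i₀ + i < N := by omega
        have h := hstep (i₀ + i) hlt
        have hre : i₀ + (i + 1) = (i₀ + i) + 1 := by omega
        rw [hre]
        constructor
        · linarith [h.1]
        · linarith [h.2]
      · intro i h1 h2
        rw [show s i₀ + (s (i₀ + i) - s i₀) = s (i₀ + i) from by ring]
        exact hinterior (i₀ + i) (by omega) (by omega)
      · rw [add_zero]
        exact hi₀P
      · rw [hd, show s i₀ + (s i₁ - s i₀) = s i₁ from by ring]
        exact hi₁P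
    rw [hd] at hfl
    -- final estimate
    have hjmem := hsmem j
    have hi₀mem := hsmem i₀
    have hle : s i₀ ≤ s j := hsmono hi₀lt.le
    have hle2 : s j ≤ s i₁ := hsmono (by omega)
    have h1 := (hqi₁ (s j) hjmem (s i₀) hi₀mem).2
    have h2 := (hqi₂ (s j) hjmem (s i₀) hi₀mem).2
    rw [abs_of_nonneg (by linarith : (0:ℝ) ≤ s j - s i₀)] at h1 h2
    have hmid : dist (γ₁ (s i₀)) (γ₂ (s i₀)) ≤ D :=
      le_trans (dist_le_fibDist' p (γ (s i₀)) _ _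
        (hfib_fin _ _ _ (hl₁ _ hi₀mem) (hl₂ _ hi₀mem))) hi₀P
    have htri : dist (γ₁ (s j)) (γ₂ (s j)) ≤ S := by
      have t1 := dist_triangle4 (γ₁ (s j)) (γ₁ (s i₀)) (γ₂ (s i₀)) (γ₂ (s j))
      rw [dist_comm (γ₂ (s i₀)) (γ₂ (s j))] at t1
      have hk0 : (0:ℝ) ≤ k := by linarith
      have hmul : k * (s j - s i₀) ≤ k * τ D :=
        mul_le_mul_of_nonneg_left (by linarith) hk0
      rw [hSdef]
      linarith
    have hfinal := hfib_proper (γ (s j)) (γ₁ (s j)) (γ₂ (s j))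
      (hl₁ _ hjmem) (hl₂ _ hjmem) S htri
    have := le_max_right D (f S)
    linarith
  constructor
  · intro n hn
    have hnN : n ≤ N := by
      have h1 : (n : ℝ) ≤ (N : ℝ) := le_trans hn (Nat.le_ceil L)
      exact_mod_cast h1
    have hsn : s n = (n : ℝ) := min_eq_left hn
    have := key n hnN
    rwa [hsn] at this
  · have h1 := le_max_left D (f S)
    linarith
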